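/- Let F: ℝⁿ ⇉ ℝᵐ have closed graph and (x̄,ȳ) ∈ gph F, with both ℝⁿ and ℝᵐ equipped with the Euclidean norm. Then rg°[F](x̄,ȳ) ≤ rg†[F](x̄,ȳ) ≤ √2 · rg°[F](x̄,ȳ). -/

import Mathlib

open Filter Topology Set ENNReal NNReal

noncomputable section

variable {E Y : Type*} [NormedAddCommGroup E] [NormedSpace ℝ E]
  [NormedAddCommGroup Y] [NormedSpace ℝ Y]

/-- The tangent (Bouligand) cone to `A` at `x`:
`T_A(x) := {u : ∃ uᵢ → u, tᵢ ↓ 0 with x + tᵢ uᵢ ∈ A}`. -/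
def tangentConeB (A : Set E) (x : E) : Set E :=
  {u | ∃ (t : ℕ → ℝ) (c : ℕ → E), (∀ i, 0 < t i) ∧ Tendsto t atTop (𝓝 0) ∧
    Tendsto c atTop (𝓝 u) ∧ ∀ i, x + t i • c i ∈ A}

/-- The Fréchet normal cone to `A` at `x` (empty outside `A`):
the polar of the tangent cone. -/
def frechetNC (A : Set E) (x : E) : Set (E →L[ℝ] ℝ) :=
  {p | x ∈ A ∧ ∀ u ∈ tangentConeB A x, p u ≤ 0}

/-- The limiting normal cone to `A` at `x`. -/
def limitingNC (A : Set E) (x : E) : Set (E →L[ℝ] ℝ) :=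
  {p | ∃ (xs : ℕ → E) (ps : ℕ → E →L[ℝ] ℝ),
    Tendsto xs atTop (𝓝 x) ∧ Tendsto ps atTop (𝓝 p) ∧
    ∀ i, ps i ∈ frechetNC A (xs i)}

/-- The directional limiting normal cone to `A` at `x` in the direction `u`. -/
def dirLimitingNC (A : Set E) (x u : E) : Set (E →L[ℝ] ℝ) :=
  {p | ∃ (t : ℕ → ℝ) (us : ℕ → E) (ps : ℕ → (E →L[ℝ] ℝ)),
    (∀ i, 0 < t i) ∧ Tendsto t atTop (𝓝 0) ∧ Tendsto us atTop (𝓝 u) ∧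
    Tendsto ps atTop (𝓝 p) ∧ ∀ i, ps i ∈ frechetNC A (x + t i • us i)}

/-- `A` is directionally regular at `x` in the direction `u`. -/
def DirRegularAt (A : Set E) (x u : E) : Prop :=
  dirLimitingNC A x u =
    {p | ∀ (t : ℕ → ℝ), (∀ i, 0 < t i) → Tendsto t atTop (𝓝 0) →
      ∃ (us : ℕ → E) (ps : ℕ → (E →L[ℝ] ℝ)), Tendsto us atTop (𝓝 u) ∧
        Tendsto ps atTop (𝓝 p) ∧ ∀ i, ps i ∈ frechetNC A (x + t i • us i)}

/-- `A` is directionally regular at `x` (in all directions). -/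
def DirRegular (A : Set E) (x : E) : Prop := ∀ u, DirRegularAt A x u

/-- The pair `(u*, v*)` viewed as a linear functional on `E × Y`. -/
def pairFun (us : E →L[ℝ] ℝ) (vs : Y →L[ℝ] ℝ) : (E × Y) →L[ℝ] ℝ :=
  us.coprod vs

/-- The primal-dual derivative of the mapping with graph `G` at `z ∈ G`:
`D̂F(xb,yb)(u,v*) := {(u*,v) : (u*,−v*) ∈ N̄_{gph F}((xb,yb);(u,v))}`. -/
def pdDeriv (G : Set (E × Y)) (z : E × Y) (u : E) (vs : Y →L[ℝ] ℝ) :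
    Set ((E →L[ℝ] ℝ) × Y) :=
  {w | pairFun w.1 (-vs) ∈ dirLimitingNC G z (u, w.2)}

/-- `rg[F](xb,yb)`. -/
def rgL (G : Set (E × Y)) (z : E × Y) : ℝ≥0∞ :=
  ⨅ (u : E) (vs : Y →L[ℝ] ℝ) (w : (E →L[ℝ] ℝ) × Y) (_ : ‖u‖ = 1)
    (_ : ‖vs‖ = 1) (_ : w ∈ pdDeriv G z u vs),
    ENNReal.ofReal (max ‖w.1‖ ‖w.2‖)

/-- `rg⋄[F](xb,yb)`. -/
def rgDiamond (G : Set (E × Y)) (z : E × Y) : ℝ≥0∞ :=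
  ⨅ (u : E) (vs : Y →L[ℝ] ℝ) (w : (E →L[ℝ] ℝ) × Y) (_ : ‖u‖ = 1)
    (_ : ‖vs‖ = 1) (_ : w ∈ pdDeriv G z u vs) (_ : w.1 u = vs w.2),
    ENNReal.ofReal (max ‖w.1‖ ‖w.2‖)

/-- `rg°[F](xb,yb)`. -/
def rgCirc (G : Set (E × Y)) (z : E × Y) : ℝ≥0∞ :=
  ⨅ (u : E) (vs : Y →L[ℝ] ℝ) (B : E →L[ℝ] Y) (_ : ‖u‖ = 1) (_ : ‖vs‖ = 1)
    (_ : (vs.comp B, B u) ∈ pdDeriv G z u vs),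
    ENNReal.ofReal ‖B‖

/-- `r̂g[F](xb,yb)`. -/
def rgHat (G : Set (E × Y)) (z : E × Y) : ℝ≥0∞ :=
  ⨅ (u : E) (vs : Y →L[ℝ] ℝ) (w : (E →L[ℝ] ℝ) × Y) (_ : ‖u‖ = 1)
    (_ : ‖vs‖ = 1) (_ : w ∈ pdDeriv G z u vs),
    ENNReal.ofReal (‖w.1‖ + ‖w.2‖)

/-- `rg†[F](xb,yb)` (intended for the Euclidean setting). -/
def rgDagger (G : Set (E × Y)) (z : E × Y) : ℝ≥0∞ :=
  ⨅ (u : E) (vs : Y →L[ℝ] ℝ) (w : (E →L[ℝ] ℝ) × Y) (_ : ‖u‖ = 1)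
    (_ : ‖vs‖ = 1) (_ : w ∈ pdDeriv G z u vs) (_ : w.1 u = vs w.2),
    ENNReal.ofReal (Real.sqrt (‖w.1‖ ^ 2 + ‖w.2‖ ^ 2 - (w.1 u) ^ 2))

/-- Metric subregularity at `xb` for `yb` of the mapping with graph `G`. -/
def MetricSubregAt (G : Set (E × Y)) (xb : E) (yb : Y) : Prop :=
  (xb, yb) ∈ G ∧ ∃ κ : ℝ≥0, ∃ U ∈ 𝓝 xb, ∀ x ∈ U,
    EMetric.infEdist x {x' | (x', yb) ∈ G} ≤
      (κ : ℝ≥0∞) * EMetric.infEdist yb {y | (x, y) ∈ G}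

/-- The graph of `F + h`, where `G` is the graph of `F`. -/
def sumGraph (G : Set (E × Y)) (h : E → Y) : Set (E × Y) :=
  {p | (p.1, p.2 - h p.1) ∈ G}

/-- `h` is Lipschitz continuous around `xb`. -/
def LipschitzAround (h : E → Y) (xb : E) : Prop :=
  ∃ K : ℝ≥0, ∃ U ∈ 𝓝 xb, LipschitzOnWith K h U

/-- The Lipschitz modulus `lip(h;xb)`. -/
def lipMod (h : E → Y) (xb : E) : ℝ≥0∞ :=
  Filter.limsup (fun p : E × E => ENNReal.ofReal (‖h p.1 - h p.2‖ / ‖p.1 - p.2‖))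
    ((𝓝 xb ×ˢ 𝓝 xb) ⊓ 𝓟 {p : E × E | p.1 ≠ p.2})

/-- The radius of metric subregularity w.r.t. Lipschitz perturbations. -/
def radLip (G : Set (E × Y)) (xb : E) (yb : Y) : ℝ≥0∞ :=
  ⨅ (h : E → Y) (_ : LipschitzAround h xb) (_ : h xb = 0)
    (_ : ¬ MetricSubregAt (sumGraph G h) xb yb), lipMod h xb

/-- The Clarke generalized Jacobian of `h` at `x`. -/
def clarkeJac (h : E → Y) (x : E) : Set (E →L[ℝ] Y) :=
  convexHull ℝ {B | ∃ xs : ℕ → E, Tendsto xs atTop (𝓝 x) ∧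
    (∀ i, DifferentiableAt ℝ h (xs i)) ∧
    Tendsto (fun i => fderiv ℝ h (xs i)) atTop (𝓝 B)}

/-- `h` is semismooth at `xb`. -/
def SemismoothAt (h : E → Y) (xb : E) : Prop :=
  LipschitzAround h xb ∧
  ∀ u : E, ∃ L : Y, ∀ (t : ℕ → ℝ) (us : ℕ → E) (V : ℕ → E →L[ℝ] Y),
    (∀ i, 0 < t i) → Tendsto t atTop (𝓝 0) → Tendsto us atTop (𝓝 u) →
    (∀ i, V i ∈ clarkeJac h (xb + t i • us i)) →
    Tendsto (fun i => V i (us i)) atTop (𝓝 L)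

/-- `h` is continuously differentiable around `xb`. -/
def C1Around (h : E → Y) (xb : E) : Prop :=
  ∃ U ∈ 𝓝 xb, ContDiffOn ℝ 1 h U

/-- The radius of metric subregularity w.r.t. semismooth perturbations. -/
def radSS (G : Set (E × Y)) (xb : E) (yb : Y) : ℝ≥0∞ :=
  ⨅ (h : E → Y) (_ : SemismoothAt h xb) (_ : h xb = 0)
    (_ : ¬ MetricSubregAt (sumGraph G h) xb yb), lipMod h xb

/-- The radius of metric subregularity w.r.t. `C¹` perturbations. -/
def radC1 (G : Set (E × Y)) (xb : E) (yb : Y) : ℝ≥0∞ :=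
  ⨅ (h : E → Y) (_ : C1Around h xb) (_ : h xb = 0)
    (_ : ¬ MetricSubregAt (sumGraph G h) xb yb), lipMod h xb



section Helpers
set_option maxHeartbeats 1000000
open RealInnerProductSpace

lemma key_arith (c W s t xx : ℝ) (hW0 : 0 ≤ W) (hc : 0 ≤ c)
    (hs2 : s ^ 2 ≤ xx) (hBes : W * s ^ 2 + t ^ 2 ≤ W * xx) :
    (|s| * c + |t|) ^ 2 ≤ (c ^ 2 + W) * xx := by
  rcases eq_or_lt_of_le hW0 with h0 | hp
  · have ht0 : t = 0 := by nlinarith [sq_nonneg t]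
    rw [ht0]
    simp only [abs_zero, add_zero]
    have hs2' : |s| ^ 2 ≤ xx := by rwa [sq_abs]
    nlinarith [mul_le_mul_of_nonneg_left hs2' (sq_nonneg c)]
  · have hBes' : W * |s| ^ 2 + |t| ^ 2 ≤ W * xx := by rwa [sq_abs, sq_abs]
    have h1 : W * ((|s| * c + |t|) ^ 2) ≤ W * ((c ^ 2 + W) * xx) := by
      nlinarith [mul_le_mul_of_nonneg_left hBes' (sq_nonneg c),
        mul_le_mul_of_nonneg_left hBes' (le_of_lt hp),
        sq_nonneg (c * |t| - W * |s|)]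
    exact le_of_mul_le_mul_left h1 hp

lemma bessel2 {E : Type*} [NormedAddCommGroup E] [InnerProductSpace ℝ E]
    (u v x : E) (huu : ⟪u, u⟫ = 1) (hvu : ⟪v, u⟫ = 0) :
    ⟪v, v⟫ * ⟪u, x⟫ ^ 2 + ⟪v, x⟫ ^ 2 ≤ ⟪v, v⟫ * ⟪x, x⟫ := by
  rcases eq_or_lt_of_le (real_inner_self_nonneg (x := v)) with h0 | hp
  · have hv : v = 0 := inner_self_eq_zero.mp h0.symm
    simp [hv]
  · have hyy : (0:ℝ) ≤ ⟪x - ⟪u, x⟫ • u - (⟪v, x⟫ / ⟪v, v⟫) • v,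
        x - ⟪u, x⟫ • u - (⟪v, x⟫ / ⟪v, v⟫) • v⟫ := real_inner_self_nonneg
    simp only [inner_sub_left, inner_sub_right, real_inner_smul_left,
      real_inner_smul_right] at hyy
    rw [real_inner_comm u x, real_inner_comm v x, real_inner_comm v u] at hyy
    rw [huu, hvu] at hyy
    set W := ⟪v, v⟫ with hW
    set s := ⟪u, x⟫ with hs
    set t := ⟪v, x⟫ with htd
    set xx := ⟪x, x⟫ with hxx
    clear_value W s t xx
    have e1 : t / W * (t / W * W) = t / W * t := by
      rw [div_mul_cancel₀ _ (ne_of_gt hp)]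
    have hyy2 : t / W * t ≤ xx - s ^ 2 := by nlinarith [hyy, e1]
    have ht2 : t ^ 2 = W * (t / W * t) := by field_simp
    linarith [mul_le_mul_of_nonneg_left hyy2 (le_of_lt hp), ht2]

lemma construct_B {E Y : Type*} [NormedAddCommGroup E] [InnerProductSpace ℝ E] [CompleteSpace E]
    [NormedAddCommGroup Y] [InnerProductSpace ℝ Y] [CompleteSpace Y]
    (u : E) (vs : Y →L[ℝ] ℝ) (w1 : E →L[ℝ] ℝ) (w2 : Y)
    (hu : ‖u‖ = 1) (hvs : ‖vs‖ = 1) (heq : w1 u = vs w2) :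
    ∃ B : E →L[ℝ] Y, vs.comp B = w1 ∧ B u = w2 ∧
      ‖B‖ ≤ Real.sqrt (‖w1‖ ^ 2 + ‖w2‖ ^ 2 - (w1 u) ^ 2) := by
  set a : E := (InnerProductSpace.toDual ℝ E).symm w1 with ha_def
  set b : Y := (InnerProductSpace.toDual ℝ Y).symm vs with hb_def
  set α : ℝ := w1 u with hα
  have ha : ∀ x : E, ⟪a, x⟫ = w1 x := fun x => InnerProductSpace.toDual_symm_apply
  have hb : ∀ y : Y, ⟪b, y⟫ = vs y := fun y => InnerProductSpace.toDual_symm_apply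
  have hna : ‖a‖ = ‖w1‖ := (InnerProductSpace.toDual ℝ E).symm.norm_map w1
  have hnb : ‖b‖ = 1 := by rw [hb_def, (InnerProductSpace.toDual ℝ Y).symm.norm_map vs, hvs]
  have huu : ⟪u, u⟫ = 1 := by
    rw [real_inner_self_eq_norm_sq, hu]; norm_num
  have hbb : ⟪b, b⟫ = 1 := by
    rw [real_inner_self_eq_norm_sq, hnb]; norm_num
  have hau : ⟪a, u⟫ = α := ha u
  set w' : E := a - α • u with hw'_def
  have hw'u : ⟪w', u⟫ = 0 := by
    simp [hw'_def, inner_sub_left, real_inner_smul_left, hau, huu, hu]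
  set W : ℝ := ⟪w', w'⟫ with hW_def
  have hW0 : 0 ≤ W := real_inner_self_nonneg
  have hWval : W = ‖w1‖ ^ 2 - α ^ 2 := by
    have h1 : ⟪u, a⟫ = α := by rw [real_inner_comm]; exact hau
    have h2 : ⟪a, a⟫ = ‖w1‖ ^ 2 := by rw [real_inner_self_eq_norm_sq, hna]
    simp only [hW_def, hw'_def, inner_sub_left, inner_sub_right, real_inner_smul_left,
      real_inner_smul_right, hau, huu, h1, h2]
    ring
  set B : E →L[ℝ] Y := (innerSL ℝ u).smulRight w2 + (innerSL ℝ w').smulRight b with hB_def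
  have hBapp : ∀ x : E, B x = ⟪u, x⟫ • w2 + ⟪w', x⟫ • b := by
    intro x; simp [hB_def]
  have hBu : B u = w2 := by
    rw [hBapp u, huu, hw'u]; simp
  have hcomp : vs.comp B = w1 := by
    ext x
    have hvw2 : vs w2 = α := heq.symm
    have hvb : vs b = 1 := by rw [← hb b]; exact hbb
    have hax : ⟪a, x⟫ = w1 x := ha x
    simp only [ContinuousLinearMap.comp_apply, hBapp x, map_add, map_smul, smul_eq_mul,
      hvw2, hvb, hw'_def, inner_sub_left, real_inner_smul_left, hax]
    ring
  refine ⟨B, hcomp, hBu, ?_⟩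
  have hC : Real.sqrt (‖w1‖ ^ 2 + ‖w2‖ ^ 2 - α ^ 2) = Real.sqrt (‖w2‖ ^ 2 + W) := by
    rw [hWval]; ring_nf
  rw [hC]
  refine ContinuousLinearMap.opNorm_le_bound B (Real.sqrt_nonneg _) fun x => ?_
  set s : ℝ := ⟪u, x⟫ with hs
  set t : ℝ := ⟪w', x⟫ with ht
  have hxbd : ‖B x‖ ≤ |s| * ‖w2‖ + |t| := by
    rw [hBapp x]
    calc ‖s • w2 + t • b‖ ≤ ‖s • w2‖ + ‖t • b‖ := norm_add_le _ _
      _ = |s| * ‖w2‖ + |t| := by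
          rw [norm_smul, norm_smul, hnb, Real.norm_eq_abs, Real.norm_eq_abs, mul_one]
  have hs2 : s ^ 2 ≤ ‖x‖ ^ 2 := by
    have h7 := abs_real_inner_le_norm u x
    rw [hu, one_mul] at h7
    nlinarith [abs_nonneg s, sq_abs s]
  have hBes : W * s ^ 2 + t ^ 2 ≤ W * ‖x‖ ^ 2 := by
    have h8 := bessel2 u w' x huu hw'u
    rw [real_inner_self_eq_norm_sq x] at h8
    rw [← hW_def, ← hs, ← ht] at h8
    exact h8
  clear_value s t W
  have key : (|s| * ‖w2‖ + |t|) ^ 2 ≤ (‖w2‖ ^ 2 + W) * ‖x‖ ^ 2 :=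
    key_arith ‖w2‖ W s t (‖x‖ ^ 2) hW0 (norm_nonneg _) hs2 hBes
  calc ‖B x‖ ≤ |s| * ‖w2‖ + |t| := hxbd
    _ = Real.sqrt ((|s| * ‖w2‖ + |t|) ^ 2) := (Real.sqrt_sq (by positivity)).symm
    _ ≤ Real.sqrt ((‖w2‖ ^ 2 + W) * ‖x‖ ^ 2) := Real.sqrt_le_sqrt key
    _ = Real.sqrt (‖w2‖ ^ 2 + W) * ‖x‖ := by
        rw [Real.sqrt_mul (by positivity), Real.sqrt_sq (norm_nonneg x)]

end Helpers

/-- in the Euclidean setting,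
`rg°[F](xb,yb) ≤ rg†[F](xb,yb) ≤ √2 · rg°[F](xb,yb)`. -/
theorem statement14 (n m : ℕ)
    (G : Set (EuclideanSpace ℝ (Fin n) × EuclideanSpace ℝ (Fin m)))
    (hG : IsClosed G) (xb : EuclideanSpace ℝ (Fin n))
    (yb : EuclideanSpace ℝ (Fin m)) (hz : (xb, yb) ∈ G) :
    rgCirc G (xb, yb) ≤ rgDagger G (xb, yb) ∧
    rgDagger G (xb, yb) ≤ ENNReal.ofReal (Real.sqrt 2) * rgCirc G (xb, yb) := by
  constructor
  · -- rgCirc ≤ rgDagger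
    rw [rgDagger]
    refine le_iInf fun u => le_iInf fun vs => le_iInf fun w => le_iInf fun hu =>
      le_iInf fun hvs => le_iInf fun hw => le_iInf fun heq => ?_
    obtain ⟨B, hcomp, hBu, hnorm⟩ := construct_B u vs w.1 w.2 hu hvs heq
    simp only [pdDeriv, Set.mem_setOf_eq] at hw
    have hmem : (vs.comp B, B u) ∈ pdDeriv G (xb, yb) u vs := by
      simp only [pdDeriv, Set.mem_setOf_eq]
      rw [hcomp, hBu]
      exact hw
    calc rgCirc G (xb, yb) ≤ ENNReal.ofReal ‖B‖ := by
          rw [rgCirc]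
          exact iInf_le_of_le u (iInf_le_of_le vs (iInf_le_of_le B (iInf_le_of_le hu
            (iInf_le_of_le hvs (iInf_le_of_le hmem le_rfl)))))
      _ ≤ ENNReal.ofReal (Real.sqrt (‖w.1‖ ^ 2 + ‖w.2‖ ^ 2 - (w.1 u) ^ 2)) :=
          ENNReal.ofReal_le_ofReal hnorm
  · -- rgDagger ≤ √2 * rgCirc
    have h0 : ENNReal.ofReal (Real.sqrt 2) ≠ 0 := by
      rw [ne_eq, ENNReal.ofReal_eq_zero, not_le]
      positivity
    have htop : ENNReal.ofReal (Real.sqrt 2) ≠ ⊤ := ENNReal.ofReal_ne_top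
    rw [rgCirc]
    simp only [ENNReal.mul_iInf_of_ne h0 htop]
    refine le_iInf fun u => le_iInf fun vs => le_iInf fun B => le_iInf fun hu =>
      le_iInf fun hvs => le_iInf fun hmem => ?_
    have heq : (vs.comp B, B u).1 u = vs (vs.comp B, B u).2 := rfl
    calc rgDagger G (xb, yb)
        ≤ ENNReal.ofReal
            (Real.sqrt (‖vs.comp B‖ ^ 2 + ‖B u‖ ^ 2 - ((vs.comp B) u) ^ 2)) := by
          rw [rgDagger]
          exact iInf_le_of_le u (iInf_le_of_le vs (iInf_le_of_le (vs.comp B, B u)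
            (iInf_le_of_le hu (iInf_le_of_le hvs (iInf_le_of_le hmem
              (iInf_le_of_le heq le_rfl))))))
      _ ≤ ENNReal.ofReal (Real.sqrt 2) * ENNReal.ofReal ‖B‖ := by
          rw [← ENNReal.ofReal_mul (Real.sqrt_nonneg 2)]
          apply ENNReal.ofReal_le_ofReal
          have h1 : ‖vs.comp B‖ ≤ ‖B‖ := by
            have h := ContinuousLinearMap.opNorm_comp_le vs B
            rwa [hvs, one_mul] at h
          have h2 : ‖B u‖ ≤ ‖B‖ := by
            have h := B.le_opNorm u
            rwa [hu, mul_one] at h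
          have h3 : ‖vs.comp B‖ ^ 2 + ‖B u‖ ^ 2 - ((vs.comp B) u) ^ 2
              ≤ 2 * ‖B‖ ^ 2 := by
            nlinarith [sq_nonneg ((vs.comp B) u), norm_nonneg B,
              norm_nonneg (vs.comp B), norm_nonneg (B u)]
          calc Real.sqrt (‖vs.comp B‖ ^ 2 + ‖B u‖ ^ 2 - ((vs.comp B) u) ^ 2)
              ≤ Real.sqrt (2 * ‖B‖ ^ 2) := Real.sqrt_le_sqrt h3
            _ = Real.sqrt 2 * ‖B‖ := by
                rw [Real.sqrt_mul (by norm_num), Real.sqrt_sq (norm_nonneg B)]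


end
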